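/- Let d_1 < ... < d_l be a divisible chain of positive integers with d_1 = 1, and let B_w = {w_1,...,w_k} be a block: a set of item types with sizes s_{w_1} ≤ ... ≤ s_{w_k} (each s equals some d_q) and bounds b_{w_v}, satisfying s_{w_j} ≤ s_{w_1} + Σ_{v<j} b_{w_v} s_{w_v} for all j ≥ 2. Suppose nonnegative integers δ^h_q (for 1 ≤ q ≤ l, q ≤ h ≤ l), each a multiple of s_{w_1} and at most Σ_v b_{w_v} s_{w_v}, satisfy Σ_{h=q}^{l} ⌈δ^h_q / d_q⌉ ≤ Σ_{w ∈ B_w: s_w = d_q} b_w for every q. Then there exist a subset R ⊆ B_w and nonnegative integers λ^h_j (for j ∈ R, h ≥ g(j), where d_{g(j)} = s_j) such that Σ_h λ^h_j ≤ b_j for all j ∈ R, and Σ_{j∈R, g(j)=q} λ^h_j = ⌈δ^h_q / d_q⌉ for every q and h ≥ q. -/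

import Mathlib

open Finset

section Aux

variable {α : Type*} [LinearOrder α]

/-- Offset of index `j` in the consecutive packing of intervals of lengths `w v`, `v ∈ T`. -/
private def off (T : Finset α) (w : α → ℕ) (j : α) : ℕ :=
  ∑ v ∈ T.filter (· < j), w v

private lemma off_add_le {T : Finset α} {w : α → ℕ} {j : α} (hj : j ∈ T) :
    off T w j + w j ≤ ∑ v ∈ T, w v := by
  have hsub : insert j (T.filter (· < j)) ⊆ T := by
    intro x hx
    rcases mem_insert.1 hx with rfl | hx
    · exact hj
    · exact (mem_filter.1 hx).1
  have h := sum_le_sum_of_subset (f := w) hsub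
  rwa [sum_insert (by simp), add_comm] at h

private lemma off_lt_le {T : Finset α} {w : α → ℕ} {i j : α} (hi : i ∈ T) (hij : i < j) :
    off T w i + w i ≤ off T w j := by
  have hsub : insert i (T.filter (· < i)) ⊆ T.filter (· < j) := by
    intro x hx
    rcases mem_insert.1 hx with rfl | hx
    · exact mem_filter.2 ⟨hi, hij⟩
    · obtain ⟨hxT, hxi⟩ := mem_filter.1 hx
      exact mem_filter.2 ⟨hxT, hxi.trans hij⟩
  have h := sum_le_sum_of_subset (f := w) hsub
  rwa [sum_insert (by simp), add_comm] at h

private lemma off_disjoint {T : Finset α} {w : α → ℕ} {i j : α} (hi : i ∈ T) (hj : j ∈ T)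
    (hij : i ≠ j) :
    Disjoint (Finset.Ico (off T w i) (off T w i + w i))
      (Finset.Ico (off T w j) (off T w j + w j)) := by
  have key : ∀ {a b : α}, a ∈ T → a < b →
      Disjoint (Finset.Ico (off T w a) (off T w a + w a))
        (Finset.Ico (off T w b) (off T w b + w b)) := by
    intro a b ha hab
    rw [Finset.disjoint_left]
    intro x hx hx'
    have h1 := (Finset.mem_Ico.1 hx).2
    have h2 := (Finset.mem_Ico.1 hx').1
    have h3 := off_lt_le (w := w) ha hab
    omega
  rcases hij.lt_or_gt with h | h
  · exact key hi h
  · exact (key hj h).symm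

private lemma sum_card_inter_le {T : Finset α} (w : α → ℕ) (K : Finset ℕ) :
    ∑ j ∈ T, (K ∩ Finset.Ico (off T w j) (off T w j + w j)).card ≤ K.card := by
  classical
  have hdisj : ∀ i ∈ T, ∀ j ∈ T, i ≠ j →
      Disjoint (K ∩ Finset.Ico (off T w i) (off T w i + w i))
        (K ∩ Finset.Ico (off T w j) (off T w j + w j)) := fun i hi j hj hij =>
    (off_disjoint hi hj hij).mono inter_subset_right inter_subset_right
  rw [← Finset.card_biUnion hdisj]
  refine Finset.card_le_card ?_
  intro x hx
  obtain ⟨j, hj, hx⟩ := Finset.mem_biUnion.1 hx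
  exact (Finset.mem_inter.1 hx).1

private lemma sum_card_inter_eq {T : Finset α} (w : α → ℕ) (I : Finset ℕ)
    (hI : I ⊆ Finset.Ico 0 (∑ v ∈ T, w v)) :
    ∑ j ∈ T, (I ∩ Finset.Ico (off T w j) (off T w j + w j)).card = I.card := by
  classical
  set J : α → Finset ℕ := fun j => Finset.Ico (off T w j) (off T w j + w j) with hJ
  have hdisj : ∀ i ∈ T, ∀ j ∈ T, i ≠ j → Disjoint (I ∩ J i) (I ∩ J j) := fun i hi j hj hij =>
    (off_disjoint hi hj hij).mono inter_subset_right inter_subset_right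
  rw [← Finset.card_biUnion hdisj]
  have hbU : T.biUnion J = Finset.Ico 0 (∑ v ∈ T, w v) := by
    apply Finset.eq_of_subset_of_card_le
    · intro x hx
      obtain ⟨j, hj, hx⟩ := Finset.mem_biUnion.1 hx
      have h2 := (Finset.mem_Ico.1 hx).2
      have h3 := off_add_le (w := w) hj
      exact Finset.mem_Ico.2 ⟨Nat.zero_le _, lt_of_lt_of_le h2 h3⟩
    · rw [Finset.card_biUnion (fun i hi j hj hij => off_disjoint hi hj hij)]
      simp [hJ, Nat.card_Ico]
  have hIb : T.biUnion (fun j => I ∩ J j) = I := by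
    have h1 : T.biUnion (fun j => I ∩ J j) = I ∩ T.biUnion J := by
      ext x
      simp only [Finset.mem_biUnion, Finset.mem_inter]
      tauto
    rw [h1, hbU, Finset.inter_eq_left.2 hI]
  rw [hIb]

end Aux

/-- Proposition 3 (block decomposition): given a block `{0,…,k-1}` of item types with
sizes `s` from a divisible chain `d`, bounds `b`, and quantities `δ q h` (multiples of the
smallest size, bounded by the block's total size) satisfying the ceiling condition, there
exist a subset `R` of the block and nonnegative integers `λ j h` realizing every
`⌈δ q h / d q⌉` while respecting the bounds `b j`. -/
theorem block_decomposition
    (l k : ℕ) (hk : 0 < k) (d : ℕ → ℕ) (s b : Fin k → ℕ) (g : Fin k → ℕ)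
    (hd1 : d 1 = 1)
    (hmono : ∀ q, 1 ≤ q → q < l → d q < d (q + 1))
    (hdvd : ∀ q, 1 ≤ q → q < l → d q ∣ d (q + 1))
    (hg : ∀ j : Fin k, g j ∈ Icc 1 l ∧ s j = d (g j))
    (hsorted : ∀ i j : Fin k, i ≤ j → s i ≤ s j)
    (hblock : ∀ j : Fin k, 0 < (j : ℕ) →
      s j ≤ s ⟨0, hk⟩ + ∑ v ∈ univ.filter (fun v : Fin k => v < j), b v * s v)
    (δ : ℕ → ℕ → ℕ)
    (hδmul : ∀ q h, s ⟨0, hk⟩ ∣ δ q h)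
    (hδle : ∀ q h, δ q h ≤ ∑ v : Fin k, b v * s v)
    (hcond : ∀ q ∈ Icc 1 l,
      ∑ h ∈ Icc q l, (δ q h + d q - 1) / d q
        ≤ ∑ w ∈ univ.filter (fun w : Fin k => s w = d q), b w) :
    ∃ (R : Finset (Fin k)) (lam : Fin k → ℕ → ℕ),
      (∀ j ∈ R, ∑ h ∈ Icc (g j) l, lam j h ≤ b j) ∧
      (∀ q ∈ Icc 1 l, ∀ h ∈ Icc q l,
        ∑ j ∈ R.filter (fun j => g j = q), lam j h = (δ q h + d q - 1) / d q) := by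
  classical
  -- ceiling quantities
  set c : ℕ → ℕ → ℕ := fun q h => (δ q h + d q - 1) / d q with hc
  -- strict monotonicity of d on [1, l]
  have dmono : ∀ a q : ℕ, 1 ≤ a → a < q → q ≤ l → d a < d q := by
    intro a q ha
    induction q with
    | zero => omega
    | succ n ih =>
      intro haq hql
      rcases lt_or_eq_of_le (Nat.lt_succ_iff.1 haq) with h | h
      · exact lt_trans (ih h (by omega)) (hmono n (by omega) (by omega))
      · subst h
        exact hmono a ha (by omega)
  have dinj : ∀ a q : ℕ, a ∈ Icc 1 l → q ∈ Icc 1 l → d a = d q → a = q := by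
    intro a q ha hq hd
    simp only [mem_Icc] at ha hq
    rcases lt_trichotomy a q with h | h | h
    · exact absurd hd (dmono a q ha.1 h hq.2).ne
    · exact h
    · exact absurd hd.symm (dmono q a hq.1 h ha.2).ne
  -- items of level q
  have hSeq : ∀ q ∈ Icc 1 l,
      univ.filter (fun w : Fin k => s w = d q) = univ.filter (fun w : Fin k => g w = q) := by
    intro q hq
    ext w
    simp only [mem_filter, mem_univ, true_and]
    constructor
    · intro h
      exact dinj (g w) q (hg w).1 hq (by rw [← (hg w).2, h])
    · intro h
      rw [(hg w).2, h]
  set S : ℕ → Finset (Fin k) := fun q => univ.filter (fun w : Fin k => g w = q) with hS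
  refine ⟨univ, fun j h =>
    (Finset.Ico (off (S (g j)) b j) (off (S (g j)) b j + b j) ∩
      Finset.Ico (off (Icc (g j) l) (c (g j)) h)
        (off (Icc (g j) l) (c (g j)) h + c (g j) h)).card, ?_, ?_⟩
  · -- row bounds
    intro j _
    have h := sum_card_inter_le (T := Icc (g j) l) (c (g j))
      (Finset.Ico (off (S (g j)) b j) (off (S (g j)) b j + b j))
    simpa [Nat.card_Ico] using h
  · -- column sums
    intro q hq h hh
    set I : Finset ℕ := Finset.Ico (off (Icc q l) (c q) h)
      (off (Icc q l) (c q) h + c q h) with hI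
    have hIsub : I ⊆ Finset.Ico 0 (∑ v ∈ S q, b v) := by
      intro x hx
      have h2 := (Finset.mem_Ico.1 hx).2
      have h3 := off_add_le (T := Icc q l) (w := c q) hh
      have h4 : ∑ h' ∈ Icc q l, c q h' ≤ ∑ w ∈ S q, b w := by
        have h5 := hcond q hq
        rwa [hSeq q hq] at h5
      exact Finset.mem_Ico.2 ⟨Nat.zero_le _, by omega⟩
    have hmain := sum_card_inter_eq (T := S q) b I hIsub
    have hsum : ∑ j ∈ (univ.filter fun j : Fin k => g j = q),
        (Finset.Ico (off (S (g j)) b j) (off (S (g j)) b j + b j) ∩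
          Finset.Ico (off (Icc (g j) l) (c (g j)) h)
            (off (Icc (g j) l) (c (g j)) h + c (g j) h)).card
        = ∑ j ∈ S q, (I ∩ Finset.Ico (off (S q) b j) (off (S q) b j + b j)).card := by
      refine sum_congr rfl ?_
      intro j hj
      have hgj : g j = q := by
        have := mem_filter.1 hj
        exact this.2
      rw [hgj, inter_comm, hI]
    rw [hsum, hmain, hI]
    simp [Nat.card_Ico, hc]
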